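/- Fix n ≥ 1 and real numbers q, p, q', p', ψ ≠ 0. Define η_m := (q/ψ − 1)^m, and for each 1 ≤ k ≤ n set a_k := η_{n−k}·q, b_k := η_{k−1}·p, a_k' := (η_{n−k}·q)' and b_k' := (η_{k−1}·p)' (derivatives via the product and chain rules with given values q', p', ψ'). Then ∑_{k=1}^{n} (a_k'·b_k − b_k'·a_k) = n·(q'p − p'q)·η_{n−1}. -/

import Mathlib

open Finset

lemma stmt9_aux_sum (n : ℕ) : ∑ k ∈ Icc 1 n, ((n : ℝ) + 1 - 2 * k) = 0 := by
  have h : ∑ k ∈ Icc 1 n, (k : ℝ) = n * (n + 1) / 2 := by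
    induction n with
    | zero => simp
    | succ m ih =>
      rw [Finset.sum_Icc_succ_top (by omega)] at *
      push_cast
      rw [ih]
      ring
  rw [Finset.sum_sub_distrib, Finset.sum_const, ← Finset.mul_sum, h, Nat.card_Icc,
    Nat.add_sub_cancel]
  push_cast
  ring

/-- Lemma 3.1.15: with `η_m := (q/ψ − 1)^m`, `a_k := η_{n−k} q`, `b_k := η_{k−1} p`
and their derivatives computed via the product rule and the derivative formula for
`η_m`, the n-th order Hamiltonian collapses:
`∑_{k=1}^{n} (a_k' b_k − b_k' a_k) = n (q'p − p'q) η_{n−1}`. -/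
theorem stmt9 (n : ℕ) (hn : 1 ≤ n) (q p q' p' ψ ψ' : ℝ) (hψ : ψ ≠ 0) :
    (∑ k ∈ Icc 1 n,
      ((((n - k : ℕ) : ℝ) / ψ * (q' - ψ' / ψ * q) * (q / ψ - 1) ^ (n - k - 1) * q +
          (q / ψ - 1) ^ (n - k) * q') * ((q / ψ - 1) ^ (k - 1) * p) -
        (((k - 1 : ℕ) : ℝ) / ψ * (q' - ψ' / ψ * q) * (q / ψ - 1) ^ (k - 2) * p +
          (q / ψ - 1) ^ (k - 1) * p') * ((q / ψ - 1) ^ (n - k) * q))) =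
      (n : ℝ) * (q' * p - p' * q) * (q / ψ - 1) ^ (n - 1) := by
  set η : ℝ := q / ψ - 1 with hη
  have key : ∀ k ∈ Icc 1 n,
      ((((n - k : ℕ) : ℝ) / ψ * (q' - ψ' / ψ * q) * η ^ (n - k - 1) * q +
          η ^ (n - k) * q') * (η ^ (k - 1) * p) -
        (((k - 1 : ℕ) : ℝ) / ψ * (q' - ψ' / ψ * q) * η ^ (k - 2) * p +
          η ^ (k - 1) * p') * (η ^ (n - k) * q)) =
      (q' - ψ' / ψ * q) * q * p / ψ * η ^ (n - 2) * ((n : ℝ) + 1 - 2 * k) +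
        (q' * p - p' * q) * η ^ (n - 1) := by
    intro k hk
    simp only [Finset.mem_Icc] at hk
    obtain ⟨hk1, hk2⟩ := hk
    rcases eq_or_lt_of_le hk1 with h1 | h1
    · subst h1
      rcases eq_or_lt_of_le hk2 with h2 | h2
      · -- n = 1
        subst h2
        norm_num
      · -- k = 1 < n
        obtain ⟨m, rfl⟩ : ∃ m, n = m + 2 := ⟨n - 2, by omega⟩
        simp only [show m + 2 - 1 = m + 1 from by omega,
          show m + 2 - 1 - 1 = m from by omega, Nat.sub_self]
        push_cast
        ring
    · rcases eq_or_lt_of_le hk2 with h2 | h2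
      · -- 1 < k = n
        subst h2
        obtain ⟨j, rfl⟩ : ∃ j, k = j + 2 := ⟨k - 2, by omega⟩
        simp only [Nat.sub_self, show j + 2 - 1 = j + 1 from by omega,
          show j + 2 - 2 = j from by omega, Nat.zero_sub, pow_zero]
        push_cast
        ring
      · -- 1 < k < n
        obtain ⟨j, rfl⟩ : ∃ j, k = j + 2 := ⟨k - 2, by omega⟩
        obtain ⟨m, rfl⟩ : ∃ m, n = j + m + 3 := ⟨n - j - 3, by omega⟩
        simp only [show j + m + 3 - (j + 2) = m + 1 from by omega,
          show j + m + 3 - (j + 2) - 1 = m from by omega,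
          show j + 2 - 1 = j + 1 from by omega,
          show j + 2 - 2 = j from by omega,
          show j + m + 3 - 2 = j + m + 1 from by omega,
          show j + m + 3 - 1 = j + m + 2 from by omega]
        push_cast
        ring
  rw [Finset.sum_congr rfl key, Finset.sum_add_distrib, ← Finset.mul_sum,
    stmt9_aux_sum, Finset.sum_const, Nat.card_Icc, mul_zero, zero_add,
    nsmul_eq_mul, Nat.add_sub_cancel]
  ring
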